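/- Let s > 0 be a real number and let f : ℝ → ℝ be defined by f(x) = 1/(1 + s x²). Then the Fourier transform of f is given by f̂(ξ) = (π/√s) · e^{−2π|ξ|/√s} for all ξ ∈ ℝ. -/

import Mathlib

open FourierTransform Real MeasureTheory Set Filter Complex Topology

lemma integrableOn_cexp_neg_mul_Ioi {c : ℂ} (hc : 0 < c.re) :
    IntegrableOn (fun x : ℝ => Complex.exp (-(c * x))) (Ioi (0:ℝ)) := by
  apply Integrable.mono' (exp_neg_integrableOn_Ioi 0 hc)
  · exact (Complex.continuous_exp.comp (by fun_prop)).aestronglyMeasurable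
  · filter_upwards with x
    simp [Complex.norm_exp]

lemma integral_cexp_neg_mul_Ioi {c : ℂ} (hc : 0 < c.re) :
    ∫ x in Ioi (0:ℝ), Complex.exp (-(c * x)) = 1 / c := by
  have hne : c ≠ 0 := fun h => by simp [h] at hc
  have hderiv : ∀ x : ℝ, HasDerivAt (fun y : ℝ => -(Complex.exp (-(c * y)) / c))
      (Complex.exp (-(c * x))) x := by
    intro x
    have h1 : HasDerivAt (fun z : ℂ => Complex.exp (-(c * z)))
        (Complex.exp (-(c * x)) * (-c)) x := by
      simpa using (((hasDerivAt_id (x:ℂ)).const_mul c).neg).cexp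
    have h2 := ((h1.div_const c).neg).comp_ofReal
    convert h2 using 1
    · rfl
    rw [mul_neg, neg_div, neg_neg, mul_div_assoc, div_self hne, mul_one]
  have htend : Tendsto (fun x : ℝ => -(Complex.exp (-(c * x)) / c)) atTop (𝓝 0) := by
    rw [tendsto_zero_iff_norm_tendsto_zero]
    have : (fun x : ℝ => ‖-(Complex.exp (-(c * x)) / c)‖)
        = fun x : ℝ => Real.exp (-(c.re * x)) / ‖c‖ := by
      funext x
      simp [Complex.norm_exp]
    rw [this]
    have := (Real.tendsto_exp_neg_atTop_nhds_zero.comp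
      (Filter.Tendsto.pos_mul_atTop hc tendsto_const_nhds tendsto_id)).div_const ‖c‖
    simpa [Function.comp, neg_mul] using this
  have := integral_Ioi_of_hasDerivAt_of_tendsto
    (f := fun y : ℝ => -(Complex.exp (-(c * y)) / c))
    (f' := fun y : ℝ => Complex.exp (-(c * y))) (a := 0)
    ((hderiv 0).continuousAt.continuousWithinAt)
    (fun x _ => hderiv x) (integrableOn_cexp_neg_mul_Ioi hc) htend
  rw [this]
  simp [neg_div]

lemma integrable_exp_neg_mul_abs {a : ℝ} (ha : 0 < a) :
    Integrable (fun x : ℝ => Real.exp (-(a * |x|))) := by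
  have A : MeasurableEmbedding (fun x : ℝ => -x) :=
    (Homeomorph.neg ℝ).isClosedEmbedding.measurableEmbedding
  have hIoi : IntegrableOn (fun x : ℝ => Real.exp (-(a * |x|))) (Ioi (0:ℝ)) := by
    apply (exp_neg_integrableOn_Ioi 0 ha).congr_fun _ measurableSet_Ioi
    intro x hx
    simp [abs_of_pos (mem_Ioi.mp hx), neg_mul]
  have hIic : IntegrableOn (fun x : ℝ => Real.exp (-(a * |x|))) (Iic (0:ℝ)) := by
    have := (A.integrableOn_map_iff (μ := volume) (f := fun x : ℝ => Real.exp (-(a * |x|)))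
      (s := Iic (0:ℝ)))
    rw [Measure.map_neg_eq_self (volume : Measure ℝ)] at this
    rw [this]
    have : (fun x : ℝ => -x) ⁻¹' Iic (0:ℝ) = Ici 0 := by ext x; simp
    rw [this]
    apply (hIoi.congr_set_ae Ioi_ae_eq_Ici.symm).congr_fun _ measurableSet_Ici
    intro x _
    simp
  rw [← integrableOn_univ, ← Set.Iic_union_Ioi (a := (0:ℝ)), integrableOn_union]
  exact ⟨hIic, hIoi⟩

lemma integrable_cexp_neg_mul_abs {a : ℝ} (ha : 0 < a) :
    Integrable (fun x : ℝ => Complex.exp (-(a * |x| : ℝ))) := by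
  simpa [Complex.ofReal_exp] using (integrable_exp_neg_mul_abs ha).ofReal (𝕜 := ℂ)

lemma fourier_cexp_neg_mul_abs {a : ℝ} (ha : 0 < a) (ξ : ℝ) :
    𝓕 (fun x : ℝ => Complex.exp (-(a * |x| : ℝ))) ξ
      = 2 * a / ((a:ℂ)^2 + (2*π*ξ)^2) := by
  have hc₁ : (0:ℝ) < ((a:ℂ) + 2*π*ξ*Complex.I).re := by simp [ha]
  have hc₂ : (0:ℝ) < ((a:ℂ) - 2*π*ξ*Complex.I).re := by simp [ha]
  rw [Real.fourier_real_eq_integral_exp_smul]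
  have hint : Integrable (fun x : ℝ =>
      Complex.exp (↑(-2 * π * x * ξ) * Complex.I) • Complex.exp (-(a * |x| : ℝ))) := by
    apply (integrable_cexp_neg_mul_abs ha).bdd_mul (c := 1)
    · exact (Complex.continuous_exp.comp (by fun_prop)).aestronglyMeasurable
    · refine ae_of_all _ fun x => ?_
      simp [Complex.norm_exp]
  rw [← intervalIntegral.integral_Iic_add_Ioi (b := (0:ℝ)) hint.integrableOn hint.integrableOn]
  have hIoi : ∫ x in Ioi (0:ℝ),
      Complex.exp (↑(-2 * π * x * ξ) * Complex.I) • Complex.exp (-(a * |x| : ℝ))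
      = 1 / ((a:ℂ) + 2*π*ξ*Complex.I) := by
    rw [← integral_cexp_neg_mul_Ioi hc₁]
    apply setIntegral_congr_fun measurableSet_Ioi
    intro x hx
    simp only [smul_eq_mul]
    rw [← Complex.exp_add, abs_of_pos hx]
    congr 1
    push_cast
    ring
  have hIic : ∫ x in Iic (0:ℝ),
      Complex.exp (↑(-2 * π * x * ξ) * Complex.I) • Complex.exp (-(a * |x| : ℝ))
      = 1 / ((a:ℂ) - 2*π*ξ*Complex.I) := by
    have := integral_comp_neg_Iic (0:ℝ) (fun x : ℝ =>
      Complex.exp (↑(-2 * π * (-x) * ξ) * Complex.I) • Complex.exp (-(a * |(-x)| : ℝ)))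
    simp only [neg_neg, neg_zero] at this
    rw [this]
    rw [← integral_cexp_neg_mul_Ioi hc₂]
    apply setIntegral_congr_fun measurableSet_Ioi
    intro x hx
    simp only [smul_eq_mul, abs_neg]
    rw [← Complex.exp_add, abs_of_pos hx]
    congr 1
    push_cast
    ring
  rw [hIic, hIoi]
  have h₁ : ((a:ℂ) + 2*π*ξ*Complex.I) ≠ 0 := fun h => by
    rw [h] at hc₁; simp at hc₁
  have h₂ : ((a:ℂ) - 2*π*ξ*Complex.I) ≠ 0 := fun h => by
    rw [h] at hc₂; simp at hc₂
  have hden : (a:ℂ)^2 + (2*π*ξ)^2 ≠ 0 := by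
    have : (a:ℂ)^2 + (2*π*ξ)^2 = ((a:ℂ) + 2*π*ξ*Complex.I) * ((a:ℂ) - 2*π*ξ*Complex.I) := by
      ring_nf
      rw [Complex.I_sq]
      ring
    rw [this]
    exact mul_ne_zero h₁ h₂
  rw [div_add_div _ _ h₂ h₁, div_eq_div_iff (mul_ne_zero h₂ h₁) hden]
  linear_combination (2*(a:ℂ)*(2*π*ξ)^2) * Complex.I_sq

/-- Lemma: the Fourier transform of `x ↦ 1/(1 + s x²)` is
`ξ ↦ (π/√s) e^{-2π|ξ|/√s}`. -/
theorem fourier_one_div_one_add_sq (s : ℝ) (hs : 0 < s) (ξ : ℝ) :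
    𝓕 (fun x : ℝ => (1 / (1 + s * x ^ 2) : ℂ)) ξ
      = ((Real.pi / Real.sqrt s : ℝ) : ℂ) *
        Complex.exp (-(2 * Real.pi * |ξ| / Real.sqrt s)) := by
  set σ := Real.sqrt s with hσdef
  have hσ : 0 < σ := Real.sqrt_pos.2 hs
  have hσ2 : σ ^ 2 = s := Real.sq_sqrt hs.le
  set a : ℝ := 2 * π / σ with hadef
  have ha : 0 < a := by positivity
  set h : ℝ → ℂ := fun x => ((π / σ : ℝ) : ℂ) * Complex.exp (-(a * |x| : ℝ)) with hdef
  have hsmul : ∀ (c : ℂ) (u : ℝ → ℂ) (w : ℝ), 𝓕 (fun x => c * u x) w = c * 𝓕 u w := by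
    intro c u w
    simp_rw [Real.fourier_real_eq, Circle.smul_def, smul_eq_mul,
      mul_left_comm _ c, integral_const_mul]
  have hFh : 𝓕 h = fun x : ℝ => (1 / (1 + s * x ^ 2) : ℂ) := by
    funext x
    rw [hdef, hsmul, fourier_cexp_neg_mul_abs ha]
    have hπ : (π:ℝ) ≠ 0 := Real.pi_ne_zero
    have hden : (1:ℝ) + s * x ^ 2 ≠ 0 := by positivity
    have hdenC : ((1:ℂ) + s * x ^ 2) ≠ 0 := by
      have : ((1:ℂ) + s * x ^ 2) = ((1 + s * x ^ 2 : ℝ) : ℂ) := by push_cast; ring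
      rw [this]
      exact_mod_cast hden
    have hden2 : (a^2 + (2*π*x)^2 : ℝ) ≠ 0 := by positivity
    have hdenC2 : ((a:ℂ)^2 + (2*π*x)^2) ≠ 0 := by
      have : ((a:ℂ)^2 + (2*π*x)^2) = ((a^2 + (2*π*x)^2 : ℝ) : ℂ) := by push_cast; ring
      rw [this]
      exact_mod_cast hden2
    have hden1 : (1:ℝ) + σ^2 * x ^ 2 ≠ 0 := by positivity
    have hreal : (π/σ) * (2*a/(a^2+(2*π*x)^2)) = 1/(1+s*x^2) := by
      rw [hadef, ← hσ2]
      field_simp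
    calc ((π / σ : ℝ) : ℂ) * (2 * (a:ℂ) / ((a:ℂ)^2 + (2*π*x)^2))
        = (((π/σ) * (2*a/(a^2+(2*π*x)^2)) : ℝ) : ℂ) := by push_cast; ring
      _ = ((1/(1+s*x^2) : ℝ) : ℂ) := by rw [hreal]
      _ = 1 / (1 + (s:ℂ) * (x:ℂ) ^ 2) := by push_cast; ring
  have hh : Integrable h := (integrable_cexp_neg_mul_abs ha).const_mul _
  have hFhInt : Integrable (𝓕 h) := by
    rw [hFh]
    have : Integrable (fun x : ℝ => ((1 / (1 + s * x ^ 2) : ℝ) : ℂ)) := by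
      apply Integrable.ofReal
      have h1 : Integrable (fun x : ℝ => (1 + x ^ 2)⁻¹) := integrable_inv_one_add_sq
      have h2 := h1.comp_mul_left' (R := σ) hσ.ne'
      apply h2.congr
      filter_upwards with x
      simp only [one_div, mul_pow, hσ2]
      exact (one_mul _).symm
    apply this.congr
    filter_upwards with x
    push_cast
    ring
  have hcont : ContinuousAt h (-ξ) := by
    apply Continuous.continuousAt
    apply continuous_const.mul
    apply Complex.continuous_exp.comp
    fun_prop
  have hinv := hh.fourierInv_fourier_eq hFhInt hcont
  have hflip : 𝓕⁻ (𝓕 h) (-ξ) = 𝓕 (𝓕 h) ξ := by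
    rw [Real.fourierInv_eq_fourier_neg, neg_neg]
  rw [← hFh, ← hflip, hinv, hdef]
  simp only [abs_neg]
  congr 2
  push_cast [hadef]
  field_simp
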